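/- Let P ∈ ℝ^{n×n} be symmetric positive definite, τ ∈ [0,1), λ > (1−τ)‖P‖, and P = L_P L_Pᵀ. Writing L_PᵀL_P = U D Uᵀ with U orthogonal and D = diag(d₁,…,dₙ), the matrix P̃ = L_P(I − ((1−τ)/λ)L_PᵀL_P)^{1/(τ−1)}L_Pᵀ satisfies tr(P̃ − P) = Σᵢ dᵢ((1 − ((1−τ)/λ)dᵢ)^{1/(τ−1)} − 1) > 0. -/

import Mathlib

open Matrix

noncomputable def matFun {n : ℕ} (A : Matrix (Fin n) (Fin n) ℝ) (f : ℝ → ℝ) :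
    Matrix (Fin n) (Fin n) ℝ :=
  if h : A.IsHermitian then
    (h.eigenvectorUnitary : Matrix (Fin n) (Fin n) ℝ) *
      Matrix.diagonal (fun i => f (h.eigenvalues i)) *
      star (h.eigenvectorUnitary : Matrix (Fin n) (Fin n) ℝ)
  else 0

theorem Matrix.isHermitian_transpose_mul_self {m n α : Type*} [Fintype m] [CommSemiring α]
    [StarRing α] [TrivialStar α] (A : Matrix m n α) : (Aᵀ * A).IsHermitian := by
  simpa [Matrix.conjTranspose_eq_transpose_of_trivial] using
    Matrix.isHermitian_conjTranspose_mul_self A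

noncomputable def specNorm {n : ℕ} (A : Matrix (Fin n) (Fin n) ℝ) : ℝ :=
  if h : A.IsHermitian then ⨆ i, h.eigenvalues i else 0

/-- `matFun` agrees with the continuous functional calculus. -/
lemma matFun_eq_cfc {n : ℕ} (A : Matrix (Fin n) (Fin n) ℝ) (hA : A.IsHermitian) (f : ℝ → ℝ) :
    matFun A f = cfc f A := by
  rw [matFun, dif_pos hA, hA.cfc_eq f, Matrix.IsHermitian.cfc]
  simp [RCLike.ofReal_real_eq_id, Function.comp_def]

/-- cfc of a Hermitian real matrix via its eigendecomposition. -/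
lemma cfc_eq_conj_diagonal {n : ℕ} (M : Matrix (Fin n) (Fin n) ℝ) (hM : M.IsHermitian)
    (g : ℝ → ℝ) :
    cfc g M = (hM.eigenvectorUnitary : Matrix (Fin n) (Fin n) ℝ) *
      Matrix.diagonal (fun i => g (hM.eigenvalues i)) *
      star (hM.eigenvectorUnitary : Matrix (Fin n) (Fin n) ℝ) := by
  rw [hM.cfc_eq g, Matrix.IsHermitian.cfc]
  simp [RCLike.ofReal_real_eq_id, Function.comp_def]

lemma cfc_affine {n : ℕ} (M : Matrix (Fin n) (Fin n) ℝ) (hM : M.IsHermitian) (c : ℝ) :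
    cfc (fun x : ℝ => 1 - c * x) M = 1 - c • M := by
  have hsa : IsSelfAdjoint M := hM
  rw [cfc_sub (fun _ => (1:ℝ)) (fun x => c * x) M, cfc_const_mul_id c M hsa,
    cfc_const 1 M hsa, _root_.map_one]

lemma trace_mul_conj_diag {n : ℕ} (M : Matrix (Fin n) (Fin n) ℝ) (hM : M.IsHermitian)
    (g : Fin n → ℝ) :
    (M * ((hM.eigenvectorUnitary : Matrix (Fin n) (Fin n) ℝ) * Matrix.diagonal g *
      star (hM.eigenvectorUnitary : Matrix (Fin n) (Fin n) ℝ))).trace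
      = ∑ i, hM.eigenvalues i * g i := by
  set U := (hM.eigenvectorUnitary : Matrix (Fin n) (Fin n) ℝ) with hUdef
  have hUU : star U * U = 1 := Unitary.coe_star_mul_self _
  have hMspec : M = U * Matrix.diagonal hM.eigenvalues * star U := by
    simpa [RCLike.ofReal_real_eq_id, Function.comp_def] using hM.spectral_theorem
  have hconjmul : ∀ A B : Matrix (Fin n) (Fin n) ℝ,
      (U * A * star U) * (U * B * star U) = U * (A * B) * star U := by
    intro A B
    simp only [Matrix.mul_assoc]
    rw [← Matrix.mul_assoc (star U) U, hUU, Matrix.one_mul]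
  have hconjtr : ∀ Y : Matrix (Fin n) (Fin n) ℝ, (U * Y * star U).trace = Y.trace := by
    intro Y
    rw [Matrix.trace_mul_cycle U Y (star U), hUU, Matrix.one_mul]
  conv_lhs => rw [hMspec]
  rw [hconjmul, hconjtr, Matrix.diagonal_mul_diagonal, Matrix.trace_diagonal]

lemma trace_herm {n : ℕ} (M : Matrix (Fin n) (Fin n) ℝ) (hM : M.IsHermitian) :
    M.trace = ∑ i, hM.eigenvalues i := by
  set U := (hM.eigenvectorUnitary : Matrix (Fin n) (Fin n) ℝ) with hUdef
  have hUU : star U * U = 1 := Unitary.coe_star_mul_self _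
  have hMspec : M = U * Matrix.diagonal hM.eigenvalues * star U := by
    simpa [RCLike.ofReal_real_eq_id, Function.comp_def] using hM.spectral_theorem
  conv_lhs => rw [hMspec]
  rw [Matrix.trace_mul_cycle U _ (star U), hUU, Matrix.one_mul, Matrix.trace_diagonal]

/-- Additional mean square error: with `P = L_P L_Pᵀ` positive definite,
`τ ∈ [0,1)`, `λ > (1−τ)‖P‖`, and `dᵢ` the eigenvalues of `L_Pᵀ L_P`, the least
favorable error covariance `P̃ = L_P (I − ((1−τ)/λ) L_Pᵀ L_P)^{1/(τ−1)} L_Pᵀ`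
satisfies `tr(P̃ − P) = ∑ᵢ dᵢ((1 − ((1−τ)/λ)dᵢ)^{1/(τ−1)} − 1) > 0`. -/
theorem additional_mse_formula {n : ℕ} (hn : 0 < n) (P L : Matrix (Fin n) (Fin n) ℝ)
    (hfac : P = L * Lᵀ) (hP : P.PosDef) (τ lam : ℝ)
    (hτ0 : 0 ≤ τ) (hτ1 : τ < 1) (hlam : (1 - τ) * specNorm P < lam) :
    (L * matFun ((1 : Matrix (Fin n) (Fin n) ℝ) - ((1 - τ) / lam) • (Lᵀ * L))
        (fun x => x ^ (1 / (τ - 1))) * Lᵀ - P).trace =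
      ∑ i : Fin n, (Matrix.isHermitian_transpose_mul_self L).eigenvalues i *
        ((1 - ((1 - τ) / lam) * (Matrix.isHermitian_transpose_mul_self L).eigenvalues i) ^
          (1 / (τ - 1)) - 1) ∧
    0 < (L * matFun ((1 : Matrix (Fin n) (Fin n) ℝ) - ((1 - τ) / lam) • (Lᵀ * L))
        (fun x => x ^ (1 / (τ - 1))) * Lᵀ - P).trace := by
  classical
  have hne : Nonempty (Fin n) := ⟨⟨0, hn⟩⟩
  have hM : (Lᵀ * L).IsHermitian := Matrix.isHermitian_transpose_mul_self L
  set c : ℝ := (1 - τ) / lam with hcdef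
  set d : Fin n → ℝ := hM.eigenvalues with hddef
  set f : ℝ → ℝ := fun x => x ^ (1 / (τ - 1)) with hfdef
  have hτ' : (0:ℝ) < 1 - τ := by linarith
  -- spectral norm facts
  have hspec : specNorm P = ⨆ i, hP.1.eigenvalues i := by rw [specNorm, dif_pos hP.1]
  have hbdd : BddAbove (Set.range hP.1.eigenvalues) := Set.Finite.bddAbove (Set.finite_range _)
  have hspec_le : ∀ k, hP.1.eigenvalues k ≤ specNorm P := fun k => hspec ▸ le_ciSup hbdd k
  have hspec_pos : 0 < specNorm P :=
    lt_of_lt_of_le (hP.eigenvalues_pos ⟨0, hn⟩) (hspec_le ⟨0, hn⟩)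
  have hlam0 : (0:ℝ) < lam := lt_trans (by positivity) hlam
  have hc : 0 < c := by rw [hcdef]; positivity
  -- the eigenvalues d i are positive
  have hdetP : 0 < P.det := hP.det_pos
  have hdetM : (Lᵀ * L).det = P.det := by
    rw [hfac, Matrix.det_mul, Matrix.det_mul, Matrix.det_transpose, mul_comm]
  have hprod : ∏ i, d i ≠ 0 := by
    have := hM.det_eq_prod_eigenvalues
    simp only [RCLike.ofReal_real_eq_id, id] at this
    rw [hdetM] at this; exact fun h => by rw [← this] at h; exact hdetP.ne' h
  have hd_pos : ∀ i, 0 < d i := by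
    intro i
    have h0 : d i ≠ 0 := fun h => hprod (Finset.prod_eq_zero (Finset.mem_univ i) h)
    exact lt_of_le_of_ne (Matrix.eigenvalues_conjTranspose_mul_self_nonneg L i) (Ne.symm h0)
  -- the eigenvalues d i are bounded by the spectral norm of P
  have hd_le : ∀ i, d i ≤ specNorm P := by
    intro i
    have h1 : d i ∈ spectrum ℝ (Lᵀ * L) := hM.eigenvalues_mem_spectrum_real i
    have h2 : d i ∈ spectrum ℝ (Lᵀ * L) \ {0} := ⟨h1, by simp [(hd_pos i).ne']⟩
    rw [spectrum.nonzero_mul_comm] at h2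
    have h3 : d i ∈ spectrum ℝ P := by rw [hfac]; exact h2.1
    rw [Matrix.IsHermitian.spectrum_real_eq_range_eigenvalues hP.1] at h3
    obtain ⟨k, hk⟩ := h3
    exact hk ▸ hspec_le k
  have hcd : ∀ i, c * d i < 1 := by
    intro i
    rw [hcdef, div_mul_eq_mul_div, div_lt_one hlam0]
    calc (1 - τ) * d i ≤ (1 - τ) * specNorm P :=
          mul_le_mul_of_nonneg_left (hd_le i) hτ'.le
      _ < lam := hlam
  have ht_pos : ∀ i, 0 < 1 - c * d i := fun i => by linarith [hcd i]
  have ht_lt1 : ∀ i, 1 - c * d i < 1 := fun i => by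
    have := mul_pos hc (hd_pos i); linarith
  have he_neg : 1 / (τ - 1) < 0 := by
    apply div_neg_of_pos_of_neg one_pos; linarith
  -- rewrite matFun via the eigendecomposition of Lᵀ * L
  have hA : ((1 : Matrix (Fin n) (Fin n) ℝ) - c • (Lᵀ * L)).IsHermitian := by
    unfold Matrix.IsHermitian
    rw [conjTranspose_sub, conjTranspose_smul, conjTranspose_one, hM.eq, star_trivial]
  have hsa : IsSelfAdjoint (Lᵀ * L) := hM
  have hfc : ContinuousOn f ((fun x : ℝ => 1 - c * x) '' spectrum ℝ (Lᵀ * L)) := by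
    intro x hx
    obtain ⟨y, hy, rfl⟩ := hx
    rw [Matrix.IsHermitian.spectrum_real_eq_range_eigenvalues hM] at hy
    obtain ⟨i, rfl⟩ := hy
    exact (Real.continuousAt_rpow_const _ _ (Or.inl (ht_pos i).ne')).continuousWithinAt
  have hkey : matFun ((1 : Matrix (Fin n) (Fin n) ℝ) - c • (Lᵀ * L)) f =
      (hM.eigenvectorUnitary : Matrix (Fin n) (Fin n) ℝ) *
      Matrix.diagonal (fun i => f (1 - c * d i)) *
      star (hM.eigenvectorUnitary : Matrix (Fin n) (Fin n) ℝ) := by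
    rw [matFun_eq_cfc _ hA, ← cfc_affine (Lᵀ * L) hM c,
      ← cfc_comp f (fun x : ℝ => 1 - c * x) (Lᵀ * L) hsa hfc (by fun_prop),
      cfc_eq_conj_diagonal _ hM]
    rfl
  -- compute the trace
  have htr : (L * matFun ((1 : Matrix (Fin n) (Fin n) ℝ) - c • (Lᵀ * L)) f * Lᵀ - P).trace =
      ∑ i, d i * (f (1 - c * d i) - 1) := by
    rw [Matrix.trace_sub, hkey, Matrix.trace_mul_cycle L _ Lᵀ,
      trace_mul_conj_diag (Lᵀ * L) hM]
    have htrP : P.trace = ∑ i, d i := by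
      rw [hfac, Matrix.trace_mul_comm, trace_herm (Lᵀ * L) hM]
    rw [htrP, ← Finset.sum_sub_distrib]
    exact Finset.sum_congr rfl fun i _ => by ring
  constructor
  · exact htr
  · rw [htr]
    apply Finset.sum_pos _ Finset.univ_nonempty
    intro i _
    apply mul_pos (hd_pos i)
    rw [sub_pos, hfdef]
    exact (Real.one_lt_rpow_iff_of_pos (ht_pos i)).mpr (Or.inr ⟨ht_lt1 i, he_neg⟩)
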